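/- For (Ω,β₁,β₂) ∈ (−π,π]×(0,π)×(0,π), the gradient of L₁ vanishes at (Ω,β₁,β₂) if and only if (Ω,β₁,β₂) is one of the following eight points: (π/2, π/2, π/2); (−π/2, π/2, π/2); (0, arccos((√5−1)/2), (1/2)·arctan(2√(2+√5))); (π, arccos((√5−1)/2), π − (1/2)·arctan(2√(2+√5))); (0, arccos((1+√6)/5), π − (1/2)·arccos(1/(1−√6))); (π, arccos((1+√6)/5), (1/2)·arccos(1/(1−√6))); (0, arccos((1−√6)/5), π − (1/2)·arccos(1/(1+√6))); (π, arccos((1−√6)/5), (1/2)·arccos(1/(1+√6))). -/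

import Mathlib

open Matrix

/-- The kinematic landscape function `L₁(Ω,β₁,β₂)`. -/
noncomputable def L1 (Ω β₁ β₂ : ℝ) : ℝ :=
  (1/8) * Real.sin β₂ ^ 2 * (3 + Real.cos (2*β₁))
  + (1/2) * Real.sin β₁ ^ 2 * Real.cos β₂ ^ 2
  - (1/2) * Real.cos Ω * Real.sin β₁ * Real.sin (β₁/2) ^ 2 * Real.sin (2*β₂)

/-- `L₁` as a function on `ℝ³`. -/
noncomputable def L1v (v : Fin 3 → ℝ) : ℝ := L1 (v 0) (v 1) (v 2)

/-- Hessian matrix of second partial derivatives of `f : ℝⁿ → ℝ` at `p`. -/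
noncomputable def hessian {n : ℕ} (f : (Fin n → ℝ) → ℝ) (p : Fin n → ℝ) :
    Matrix (Fin n) (Fin n) ℝ :=
  Matrix.of fun i j => fderiv ℝ (fun y => fderiv ℝ f y (Pi.single j 1)) p (Pi.single i 1)

open Real

noncomputable def pr (i : Fin 3) : (Fin 3 → ℝ) →L[ℝ] ℝ :=
  ContinuousLinearMap.proj i

noncomputable def p1 (Ω β₁ β₂ : ℝ) : ℝ :=
  (1/2) * Real.sin Ω * Real.sin β₁ * Real.sin (β₁/2)^2 * Real.sin (2*β₂)

noncomputable def p2 (Ω β₁ β₂ : ℝ) : ℝ :=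
  -(1/4) * Real.sin β₂^2 * Real.sin (2*β₁) + Real.sin β₁ * Real.cos β₁ * Real.cos β₂^2
  - (1/2) * Real.cos Ω * (Real.cos β₁ * Real.sin (β₁/2)^2
      + Real.sin β₁ * Real.sin (β₁/2) * Real.cos (β₁/2)) * Real.sin (2*β₂)

noncomputable def p3 (Ω β₁ β₂ : ℝ) : ℝ :=
  (1/4) * Real.sin β₂ * Real.cos β₂ * (3 + Real.cos (2*β₁))
  - Real.sin β₁^2 * Real.sin β₂ * Real.cos β₂
  - Real.cos Ω * Real.sin β₁ * Real.sin (β₁/2)^2 * Real.cos (2*β₂)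

noncomputable def dL (Ω β₁ β₂ : ℝ) : (Fin 3 → ℝ) →L[ℝ] ℝ :=
  p1 Ω β₁ β₂ • pr 0 + p2 Ω β₁ β₂ • pr 1 + p3 Ω β₁ β₂ • pr 2

lemma hasF (x : Fin 3 → ℝ) : HasFDerivAt L1v (dL (x 0) (x 1) (x 2)) x := by
  have h0 : HasFDerivAt (fun v : Fin 3 → ℝ => v 0) (pr 0) x :=
    (pr 0).hasFDerivAt
  have h1 : HasFDerivAt (fun v : Fin 3 → ℝ => v 1) (pr 1) x :=
    (pr 1).hasFDerivAt
  have h2 : HasFDerivAt (fun v : Fin 3 → ℝ => v 2) (pr 2) x :=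
    (pr 2).hasFDerivAt
  have hL : L1v = fun v : Fin 3 → ℝ =>
      (1/8) * (Real.sin (v 2) * Real.sin (v 2)) * (3 + Real.cos (2 * v 1))
      + (1/2) * (Real.sin (v 1) * Real.sin (v 1)) * (Real.cos (v 2) * Real.cos (v 2))
      - (1/2) * Real.cos (v 0) * Real.sin (v 1)
          * (Real.sin (v 1 / 2) * Real.sin (v 1 / 2)) * Real.sin (2 * v 2) := by
    funext v; simp only [L1v, L1]; ring
  have t1 := (((h2.sin.mul h2.sin).const_mul ((1:ℝ)/8)).mul
      ((h1.const_mul (2:ℝ)).cos.const_add (3:ℝ)))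
  have t2 := (((h1.sin.mul h1.sin).const_mul ((1:ℝ)/2)).mul (h2.cos.mul h2.cos))
  have heq : (fun v : Fin 3 → ℝ => v 1 / 2) = fun v => (1/2 : ℝ) * v 1 := by
    funext v; ring
  have hhalf : HasFDerivAt (fun v : Fin 3 → ℝ => v 1 / 2) ((1/2 : ℝ) • pr 1) x := by
    rw [heq]; exact h1.const_mul _
  have t3 := ((((h0.cos.const_mul ((1:ℝ)/2)).mul h1.sin).mul
      (hhalf.sin.mul hhalf.sin)).mul
      ((h2.const_mul (2:ℝ)).sin))
  have H := (t1.add t2).sub t3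
  rw [hL]
  convert H using 1
  · rfl
  · rfl
  · rfl
  · rfl
  · rfl
  · rfl
  apply ContinuousLinearMap.ext
  intro v
  simp only [dL, pr, p1, p2, p3, ContinuousLinearMap.add_apply, ContinuousLinearMap.sub_apply,
    ContinuousLinearMap.smul_apply, ContinuousLinearMap.proj_apply, smul_eq_mul,
    ContinuousLinearMap.coe_smul', Pi.smul_apply, Pi.mul_apply, Pi.pow_apply]
  have hs2 : Real.sin (x 1) = 2 * Real.sin (x 1 / 2) * Real.cos (x 1 / 2) := by
    rw [← Real.sin_two_mul]; ring_nf
  rw [hs2]; ring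

lemma dL_eq_zero_iff (Ω β₁ β₂ : ℝ) :
    dL Ω β₁ β₂ = 0 ↔ p1 Ω β₁ β₂ = 0 ∧ p2 Ω β₁ β₂ = 0 ∧ p3 Ω β₁ β₂ = 0 := by
  constructor
  · intro h
    refine ⟨?_, ?_, ?_⟩
    · have := congrArg (fun L : (Fin 3 → ℝ) →L[ℝ] ℝ => L (Pi.single 0 1)) h
      simpa [dL, pr, Pi.single_apply] using this
    · have := congrArg (fun L : (Fin 3 → ℝ) →L[ℝ] ℝ => L (Pi.single 1 1)) h
      simpa [dL, pr, Pi.single_apply] using this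
    · have := congrArg (fun L : (Fin 3 → ℝ) →L[ℝ] ℝ => L (Pi.single 2 1)) h
      simpa [dL, pr, Pi.single_apply] using this
  · rintro ⟨h1, h2, h3⟩
    apply ContinuousLinearMap.ext
    intro v
    simp [dL, h1, h2, h3]

lemma fderiv_L1v (Ω β₁ β₂ : ℝ) : fderiv ℝ L1v ![Ω, β₁, β₂] = dL Ω β₁ β₂ := by
  have := (hasF ![Ω, β₁, β₂]).fderiv
  simpa using this

lemma sin_half_sq (x : ℝ) : Real.sin (x/2)^2 = (1 - Real.cos x)/2 := by
  have h1 := Real.cos_two_mul (x/2)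
  have h2 := Real.sin_sq_add_cos_sq (x/2)
  rw [show 2*(x/2) = x by ring] at h1
  linarith

lemma sin_half_mul_cos_half (x : ℝ) : Real.sin (x/2) * Real.cos (x/2) = Real.sin x / 2 := by
  have h1 := Real.sin_two_mul (x/2)
  rw [show 2*(x/2) = x by ring] at h1
  linarith

lemma crit_iff (Ω β₁ β₂ : ℝ) :
    fderiv ℝ L1v ![Ω, β₁, β₂] = 0 ↔
      (Real.sin Ω * (Real.sin β₁ * ((1 - Real.cos β₁) * Real.sin (2*β₂))) = 0
      ∧ Real.sin β₁ * Real.cos β₁ * (1 + 3*Real.cos (2*β₂))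
          = Real.cos Ω * ((1 - Real.cos β₁)*(1 + 2*Real.cos β₁)*Real.sin (2*β₂))
      ∧ Real.sin (2*β₂) * (3*Real.cos β₁^2 - 1)
          = 2*(Real.cos Ω * (Real.sin β₁ * ((1 - Real.cos β₁)*Real.cos (2*β₂))))) := by
  rw [fderiv_L1v, dL_eq_zero_iff]
  have i1 : Real.sin β₂^2 = (1 - Real.cos (2*β₂))/2 := by
    have := Real.cos_two_mul β₂; have := Real.sin_sq_add_cos_sq β₂; linarith
  have i2 : Real.cos β₂^2 = (1 + Real.cos (2*β₂))/2 := by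
    have := Real.cos_two_mul β₂; linarith
  have i3 : Real.sin (2*β₁) = 2 * Real.sin β₁ * Real.cos β₁ := Real.sin_two_mul β₁
  have i3' : Real.cos (2*β₁) = 2 * Real.cos β₁^2 - 1 := Real.cos_two_mul β₁
  have i4 : Real.sin (β₁/2)^2 = (1 - Real.cos β₁)/2 := sin_half_sq β₁
  have i5 : Real.sin (β₁/2) * Real.cos (β₁/2) = Real.sin β₁ / 2 := sin_half_mul_cos_half β₁
  have i6 : Real.sin β₁^2 = 1 - Real.cos β₁^2 := by
    have := Real.sin_sq_add_cos_sq β₁; linarith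
  have i7 : Real.sin β₂ * Real.cos β₂ = Real.sin (2*β₂) / 2 := by
    have := Real.sin_two_mul β₂; linarith
  have hp1 : p1 Ω β₁ β₂
      = (1/4) * (Real.sin Ω * (Real.sin β₁ * ((1 - Real.cos β₁) * Real.sin (2*β₂)))) := by
    rw [p1, i4]; ring
  have hp2 : p2 Ω β₁ β₂
      = (1/4) * (Real.sin β₁ * Real.cos β₁ * (1 + 3*Real.cos (2*β₂))
        - Real.cos Ω * ((1 - Real.cos β₁)*(1 + 2*Real.cos β₁)*Real.sin (2*β₂))) := by
    rw [p2, i1, i2, i3, i4]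
    linear_combination (-(1/2) * Real.cos Ω * Real.sin (2*β₂) * Real.sin β₁) * i5
      + (-(1/4) * Real.cos Ω * Real.sin (2*β₂)) * i6
  have hp3 : p3 Ω β₁ β₂
      = (1/4) * (Real.sin (2*β₂) * (3*Real.cos β₁^2 - 1)
        - 2*(Real.cos Ω * (Real.sin β₁ * ((1 - Real.cos β₁)*Real.cos (2*β₂))))) := by
    rw [p3, i3', i4, i6]
    linear_combination ((1/4) * (3 + (2*Real.cos β₁^2 - 1)) - (1 - Real.cos β₁^2)) * i7
  rw [hp1, hp2, hp3]
  constructor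
  · rintro ⟨h1, h2, h3⟩
    exact ⟨by linarith, by linarith, by linarith⟩
  · rintro ⟨h1, h2, h3⟩
    exact ⟨by rw [h1]; ring, by rw [h2]; ring, by rw [h3]; ring⟩

lemma eq_of_sq_eq {x y : ℝ} (hx : 0 ≤ x) (hy : 0 ≤ y) (h : x^2 = y^2) : x = y := by
  rw [← Real.sqrt_sq hx, h, Real.sqrt_sq hy]

lemma key {c s C S ω : ℝ} (hs2 : s^2 = 1 - c^2) (hs0 : 0 < s)
    (hc1 : -1 < c) (hc2 : c < 1) (hU : Real.sin (0:ℝ) = 0) : True := trivial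

set_option maxHeartbeats 1000000 in
lemma key' {c s C S ω : ℝ} (hs2 : s^2 = 1 - c^2) (hs0 : 0 < s)
    (hc1 : -1 < c) (hc2 : c < 1) (hU : C^2 + S^2 = 1) (hω : ω^2 = 1)
    (e1 : s*c*(1+3*C) = ω*((1-c)*(1+2*c)*S))
    (e2 : S*(3*c^2-1) = 2*(ω*(s*((1-c)*C)))) :
    (c = (Real.sqrt 5 - 1)/2 ∧ C = Real.sqrt 5 - 2 ∧ 0 < S*ω)
    ∨ (c = (1+Real.sqrt 6)/5 ∧ C = -((1+Real.sqrt 6)/5) ∧ S*ω < 0)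
    ∨ (c = (1-Real.sqrt 6)/5 ∧ C = (Real.sqrt 6-1)/5 ∧ S*ω < 0) := by
  have hωne : ω ≠ 0 := by intro h; rw [h] at hω; norm_num at hω
  have hsne : s ≠ 0 := ne_of_gt hs0
  have h1c : 0 < 1 - c := by linarith
  -- 3c² - 1 ≠ 0
  have h3 : 3*c^2 - 1 ≠ 0 := by
    intro h
    have hC0 : C = 0 := by
      have : 2*(ω*(s*((1-c)*C))) = 0 := by rw [← e2, h]; ring
      have := mul_eq_zero.mp this
      rcases this with h' | h'
      · norm_num at h'
      rcases mul_eq_zero.mp h' with h' | h'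
      · exact absurd h' hωne
      rcases mul_eq_zero.mp h' with h' | h'
      · exact absurd h' hsne
      rcases mul_eq_zero.mp h' with h' | h'
      · linarith
      · exact h'
    have hS2 : S^2 = 1 := by rw [hC0] at hU; linarith
    have hsq : (s*c)^2 = ((1-c)*(1+2*c))^2 := by
      have h' := congrArg (fun t => t^2) e1
      simp only [hC0] at h'
      linear_combination h' + ((1-c)*(1+2*c))^2*S^2*hω + ((1-c)*(1+2*c))^2*hS2
    have hc2' : c^2 = 1/3 := by linarith
    have hc13 : c = -1/3 := by nlinarith [hsq, hs2, hc2']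
    rw [hc13] at hc2'; norm_num at hc2'
  -- (†) : C * P = -c(3c²-1)
  have hsG : s * (c*(3*c^2-1) + C*(5*c^3+6*c^2-3*c-2)) = 0 := by
    linear_combination (3*c^2-1)*e1 + ω*(1-c)*(1+2*c)*e2 + 2*s*(1-c)^2*(1+2*c)*C*hω
  have hCP : C*(5*c^3+6*c^2-3*c-2) = -(c*(3*c^2-1)) := by
    rcases mul_eq_zero.mp hsG with h | h
    · exact absurd h hsne
    · linarith
  -- (‡)
  have hH2 : (3*c^2-1)^2 = C^2*((3*c^2-1)^2 + 4*(1-c^2)*(1-c)^2) := by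
    linear_combination (S*(3*c^2-1) + 2*ω*s*(1-c)*C)*e2 - (3*c^2-1)^2*hU
      + 4*C^2*(1-c)^2*s^2*hω + 4*C^2*(1-c)^2*hs2
  -- polynomial equation for c
  have h6 : (3*c^2-1)^2 * (4*((c+1)^2*((c^2+c-1)*(5*c^2-2*c-1)))) = 0 := by
    linear_combination (5*c^3+6*c^2-3*c-2)^2*hH2
      + ((3*c^2-1)^2+4*(1-c^2)*(1-c)^2)*(C*(5*c^3+6*c^2-3*c-2) - c*(3*c^2-1))*hCP
  have hQ : (c^2+c-1)*(5*c^2-2*c-1) = 0 := by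
    have h4 := (mul_eq_zero.mp h6).resolve_left (pow_ne_zero 2 h3)
    have h5 := (mul_eq_zero.mp (by linarith [h4] : (4:ℝ)*((c+1)^2*((c^2+c-1)*(5*c^2-2*c-1))) = 0)).resolve_left (by norm_num)
    have hcne : (c+1)^2 ≠ 0 := pow_ne_zero 2 (by linarith)
    exact (mul_eq_zero.mp h5).resolve_left hcne
  -- sign relation
  have hSω : S*ω*(3*c^2-1) = 2*s*(1-c)*C := by
    linear_combination ω*e2 + 2*s*(1-c)*C*hω
  clear hsG hH2 h6 hU e1 e2 hs2
  rcases mul_eq_zero.mp hQ with hA | hB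
  · -- golden ratio case
    left
    have ha : Real.sqrt 5 ^ 2 = 5 := Real.sq_sqrt (by norm_num)
    have ha0 := Real.sqrt_nonneg 5
    have ha2 : 2 < Real.sqrt 5 := by nlinarith
    have ha3 : Real.sqrt 5 < 3 := by nlinarith
    have hroots : (2*c+1 - Real.sqrt 5)*(2*c+1 + Real.sqrt 5) = 0 := by
      linear_combination 4*hA - ha
    have hc : c = (Real.sqrt 5 - 1)/2 := by
      rcases mul_eq_zero.mp hroots with h | h
      · linarith
      · linarith
    rw [hc] at hCP
    have h7 : (C - (Real.sqrt 5 - 2)) * ((Real.sqrt 5 - 3)/2) = 0 := by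
      linear_combination hCP - ((C*(5*Real.sqrt 5 - 3) + 3*Real.sqrt 5 - 5)/8)*ha
    have hCval : C = Real.sqrt 5 - 2 := by
      rcases mul_eq_zero.mp h7 with h | h
      · linarith
      · linarith
    refine ⟨hc, hCval, ?_⟩
    clear hCP hroots hQ
    have h2c : 3*c^2 - 1 = 2 - 3*c := by linear_combination 3*hA
    have ha73 : Real.sqrt 5 < 7/3 := by nlinarith
    have h3pos : 0 < 3*c^2 - 1 := by rw [h2c, hc]; linarith
    have hCpos : 0 < C := by rw [hCval]; linarith
    nlinarith [hSω, mul_pos (mul_pos (mul_pos (by norm_num : (0:ℝ) < 2) hs0) h1c) hCpos, h3pos]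
  · -- sqrt 6 cases
    have hb : Real.sqrt 6 ^ 2 = 6 := Real.sq_sqrt (by norm_num)
    have hb0 := Real.sqrt_nonneg 6
    have hb2 : 2 < Real.sqrt 6 := by nlinarith
    have hb3 : Real.sqrt 6 < 3 := by nlinarith
    have hP : 5*c^3+6*c^2-3*c-2 = 3*c^2-1 := by linear_combination (c+1)*hB
    rw [hP] at hCP
    have hCc : C = -c := by
      have h7 : (C + c) * (3*c^2 - 1) = 0 := by linear_combination hCP
      rcases mul_eq_zero.mp h7 with h | h
      · linarith
      · exact absurd h h3
    have hroots : (5*c - 1 - Real.sqrt 6)*(5*c - 1 + Real.sqrt 6) = 0 := by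
      linear_combination 5*hB - hb
    rcases mul_eq_zero.mp hroots with h | h
    · right; left
      have hc : c = (1 + Real.sqrt 6)/5 := by linarith
      refine ⟨hc, by rw [hCc, hc], ?_⟩
      clear hCP hroots hQ
      have h2c : 3*c^2 - 1 = (6*c - 2)/5 := by linear_combination (3/5)*hB
      have h3pos : 0 < 3*c^2 - 1 := by rw [h2c, hc]; nlinarith
      have hcpos : 0 < c := by rw [hc]; nlinarith
      have hRneg : 2*s*(1-c)*C < 0 := by
        rw [hCc]
        nlinarith [mul_pos (mul_pos (mul_pos (by norm_num : (0:ℝ) < 2) hs0) h1c) hcpos]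
      nlinarith [hSω, h3pos, hRneg]
    · right; right
      have hc : c = (1 - Real.sqrt 6)/5 := by linarith
      refine ⟨hc, by rw [hCc, hc]; ring, ?_⟩
      clear hCP hroots hQ
      have h2c : 3*c^2 - 1 = (6*c - 2)/5 := by linear_combination (3/5)*hB
      have h3neg : 3*c^2 - 1 < 0 := by rw [h2c, hc]; nlinarith
      have hcneg : c < 0 := by rw [hc]; nlinarith
      have hRpos : 0 < 2*s*(1-c)*C := by
        rw [hCc]
        nlinarith [mul_pos (mul_pos (mul_pos (by norm_num : (0:ℝ) < 2) hs0) h1c) (neg_pos.mpr hcneg)]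
      nlinarith [hSω, h3neg, hRpos]

lemma sin_nonpos_pi_two_pi {x : ℝ} (h1 : π ≤ x) (h2 : x ≤ 2*π) : Real.sin x ≤ 0 := by
  have h : Real.sin (x - π) = -Real.sin x := by
    rw [Real.sin_sub]; simp
  have h' : 0 ≤ Real.sin (x - π) :=
    Real.sin_nonneg_of_nonneg_of_le_pi (by linarith) (by linarith)
  linarith

lemma two_beta_le_pi {β₂ : ℝ} (h1 : 0 < β₂) (h2 : β₂ < π) (hS : 0 < Real.sin (2*β₂)) :
    2*β₂ ≤ π := by
  by_contra h
  push_neg at h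
  have := sin_nonpos_pi_two_pi (x := 2*β₂) (by linarith) (by linarith)
  linarith

lemma pi_le_two_beta {β₂ : ℝ} (h1 : 0 < β₂) (h2 : β₂ < π) (hS : Real.sin (2*β₂) < 0) :
    π ≤ 2*β₂ := by
  by_contra h
  push_neg at h
  have := Real.sin_nonneg_of_nonneg_of_le_pi (x := 2*β₂) (by linarith) (by linarith)
  linarith

lemma two_beta_eq_pos {β₂ : ℝ} (h1 : 0 < β₂) (h2 : β₂ < π) (hS : 0 < Real.sin (2*β₂)) :
    2*β₂ = Real.arccos (Real.cos (2*β₂)) :=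
  (Real.arccos_cos (by linarith) (two_beta_le_pi h1 h2 hS)).symm

lemma two_beta_eq_neg {β₂ : ℝ} (h1 : 0 < β₂) (h2 : β₂ < π) (hS : Real.sin (2*β₂) < 0) :
    2*π - 2*β₂ = Real.arccos (Real.cos (2*β₂)) := by
  have h := Real.arccos_cos (x := 2*π - 2*β₂) (by linarith) (by linarith [pi_le_two_beta h1 h2 hS])
  rw [Real.cos_two_pi_sub] at h
  exact h.symm

lemma omega_cases {Ω : ℝ} (h1 : -π < Ω) (h2 : Ω ≤ π) (hσ : Real.sin Ω = 0) :
    Ω = 0 ∨ Ω = π := by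
  have hπ := Real.pi_pos
  rcases Real.sin_eq_zero_iff.mp hσ with ⟨n, hn⟩
  have hn1 : (-1 : ℝ) < n := by
    by_contra h
    push_neg at h
    nlinarith [hn]
  have hn2 : (n : ℝ) ≤ 1 := by
    by_contra h
    push_neg at h
    nlinarith [hn]
  have : n = 0 ∨ n = 1 := by
    have : (-1 : ℤ) < n := by exact_mod_cast hn1
    have : n ≤ 1 := by exact_mod_cast hn2
    omega
  rcases this with h | h <;> [left; right] <;> rw [h] at hn <;> push_cast at hn <;> linarith

lemma omega_cases' {Ω : ℝ} (h1 : -π < Ω) (h2 : Ω ≤ π) (hω : Real.cos Ω = 0) :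
    Ω = π/2 ∨ Ω = -(π/2) := by
  have hπ := Real.pi_pos
  rcases Real.cos_eq_zero_iff.mp hω with ⟨n, hn⟩
  have hn1 : (-2 : ℝ) < 2*(n:ℝ)+1 := by nlinarith [hn]
  have hn2 : (2*(n:ℝ)+1) ≤ 2 := by nlinarith [hn]
  have : n = 0 ∨ n = -1 := by
    have h1' : (-2 : ℝ) < 2*(n:ℝ)+1 := hn1
    have : (-2 : ℤ) < 2*n+1 := by exact_mod_cast h1'
    have : (2*n+1 : ℤ) ≤ 2 := by exact_mod_cast hn2
    omega
  rcases this with h | h <;> [left; right] <;> rw [h] at hn <;> push_cast at hn <;> linarith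

lemma beta1_half {x : ℝ} (h1 : 0 < x) (h2 : x < π) (h : Real.cos x = 0) : x = π/2 := by
  have hπ := Real.pi_pos
  rcases Real.cos_eq_zero_iff.mp h with ⟨n, hn⟩
  have hn1 : (0 : ℝ) < 2*(n:ℝ)+1 := by nlinarith [hn]
  have hn2 : (2*(n:ℝ)+1) < 2 := by nlinarith [hn]
  have : n = 0 := by
    have : (0 : ℤ) < 2*n+1 := by exact_mod_cast hn1
    have : (2*n+1 : ℤ) < 2 := by exact_mod_cast hn2
    omega
  rw [this] at hn; push_cast at hn; linarith

lemma beta2_half {β₂ : ℝ} (h1 : 0 < β₂) (h2 : β₂ < π) (h : Real.sin (2*β₂) = 0) :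
    β₂ = π/2 := by
  have hπ := Real.pi_pos
  rcases Real.sin_eq_zero_iff.mp h with ⟨n, hn⟩
  have hn1 : (0 : ℝ) < n := by nlinarith [hn]
  have hn2 : (n : ℝ) < 2 := by nlinarith [hn]
  have : n = 1 := by
    have : (0 : ℤ) < n := by exact_mod_cast hn1
    have : (n : ℤ) < 2 := by exact_mod_cast hn2
    omega
  rw [this] at hn; push_cast at hn; linarith

lemma arccos_golden :
    Real.arccos (Real.sqrt 5 - 2) = Real.arctan (2*Real.sqrt (2+Real.sqrt 5)) := by
  have ha : Real.sqrt 5 ^ 2 = 5 := Real.sq_sqrt (by norm_num)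
  have ha0 := Real.sqrt_nonneg 5
  have ha2 : 2 < Real.sqrt 5 := by nlinarith
  have ha3 : Real.sqrt 5 < 3 := by nlinarith
  rw [Real.arccos_eq_arctan (by linarith)]
  congr 1
  have h1 : (1:ℝ) - (Real.sqrt 5-2)^2 = 4*Real.sqrt 5 - 8 := by linear_combination -ha
  rw [h1]
  have h52 : (0:ℝ) < Real.sqrt 5 - 2 := by linarith
  apply eq_of_sq_eq (by positivity) (by positivity)
  rw [div_pow, mul_pow, Real.sq_sqrt (by linarith : (0:ℝ) ≤ 4*Real.sqrt 5 - 8),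
    Real.sq_sqrt (by linarith : (0:ℝ) ≤ 2+Real.sqrt 5),
    div_eq_iff (by nlinarith : ((Real.sqrt 5-2)^2) ≠ 0)]
  linear_combination (-(4*Real.sqrt 5 - 8))*ha

lemma inv_one_sub_sqrt6 : (1:ℝ)/(1-Real.sqrt 6) = -((1+Real.sqrt 6)/5) := by
  have hb : Real.sqrt 6 ^ 2 = 6 := Real.sq_sqrt (by norm_num)
  have hb0 := Real.sqrt_nonneg 6
  have hb2 : 2 < Real.sqrt 6 := by nlinarith
  rw [div_eq_iff (by intro h; nlinarith : (1:ℝ)-Real.sqrt 6 ≠ 0)]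
  linear_combination (-1/5)*hb

lemma inv_one_add_sqrt6 : (1:ℝ)/(1+Real.sqrt 6) = (Real.sqrt 6-1)/5 := by
  have hb : Real.sqrt 6 ^ 2 = 6 := Real.sq_sqrt (by norm_num)
  have hb0 := Real.sqrt_nonneg 6
  have hb2 : 2 < Real.sqrt 6 := by nlinarith
  rw [div_eq_iff (by intro h; nlinarith : (1:ℝ)+Real.sqrt 6 ≠ 0)]
  linear_combination (-1/5)*hb

lemma cos_2b_golden :
    Real.cos (2*((1/2) * Real.arctan (2*Real.sqrt (2+Real.sqrt 5)))) = Real.sqrt 5 - 2 := by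
  have ha : Real.sqrt 5 ^ 2 = 5 := Real.sq_sqrt (by norm_num)
  have ha0 := Real.sqrt_nonneg 5
  have ha2 : 2 < Real.sqrt 5 := by nlinarith
  have harg : (1:ℝ) + (2*Real.sqrt (2+Real.sqrt 5))^2 = (2+Real.sqrt 5)^2 := by
    rw [mul_pow, Real.sq_sqrt (by linarith : (0:ℝ) ≤ 2+Real.sqrt 5)]
    linear_combination -ha
  rw [show 2*((1/2) * Real.arctan (2*Real.sqrt (2+Real.sqrt 5)))
      = Real.arctan (2*Real.sqrt (2+Real.sqrt 5)) by ring,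
    Real.cos_arctan, harg, Real.sqrt_sq (by linarith : (0:ℝ) ≤ 2+Real.sqrt 5),
    div_eq_iff (by nlinarith : (2+Real.sqrt 5) ≠ 0)]
  linear_combination -ha

lemma sin_2b_golden :
    Real.sin (2*((1/2) * Real.arctan (2*Real.sqrt (2+Real.sqrt 5))))
      = 2*Real.sqrt (2+Real.sqrt 5) * (Real.sqrt 5 - 2) := by
  have ha : Real.sqrt 5 ^ 2 = 5 := Real.sq_sqrt (by norm_num)
  have ha0 := Real.sqrt_nonneg 5
  have ha2 : 2 < Real.sqrt 5 := by nlinarith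
  have harg : (1:ℝ) + (2*Real.sqrt (2+Real.sqrt 5))^2 = (2+Real.sqrt 5)^2 := by
    rw [mul_pow, Real.sq_sqrt (by linarith : (0:ℝ) ≤ 2+Real.sqrt 5)]
    linear_combination -ha
  rw [show 2*((1/2) * Real.arctan (2*Real.sqrt (2+Real.sqrt 5)))
      = Real.arctan (2*Real.sqrt (2+Real.sqrt 5)) by ring,
    Real.sin_arctan, harg, Real.sqrt_sq (by linarith : (0:ℝ) ≤ 2+Real.sqrt 5),
    div_eq_iff (by nlinarith : (2+Real.sqrt 5) ≠ 0)]
  linear_combination (-2*Real.sqrt (2+Real.sqrt 5))*ha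

lemma gold1 :
    Real.sin (Real.arccos ((Real.sqrt 5-1)/2)) * ((Real.sqrt 5-1)/2) * (1+3*(Real.sqrt 5-2))
      = (1-(Real.sqrt 5-1)/2)*(1+2*((Real.sqrt 5-1)/2))*(2*Real.sqrt (2+Real.sqrt 5)*(Real.sqrt 5-2)) := by
  have ha : Real.sqrt 5 ^ 2 = 5 := Real.sq_sqrt (by norm_num)
  have ha0 := Real.sqrt_nonneg 5
  have ha2 : 2 < Real.sqrt 5 := by nlinarith
  have ha3 : Real.sqrt 5 < 3 := by nlinarith
  have hs : Real.sin (Real.arccos ((Real.sqrt 5-1)/2)) = Real.sqrt (1 - ((Real.sqrt 5-1)/2)^2) :=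
    Real.sin_arccos _
  have hs0 : 0 ≤ Real.sin (Real.arccos ((Real.sqrt 5-1)/2)) := by rw [hs]; positivity
  have hs2 : Real.sin (Real.arccos ((Real.sqrt 5-1)/2))^2 = 1 - ((Real.sqrt 5-1)/2)^2 := by
    rw [hs]; exact Real.sq_sqrt (by nlinarith)
  have ht2 : (Real.sqrt (2+Real.sqrt 5))^2 = 2+Real.sqrt 5 :=
    Real.sq_sqrt (by linarith)
  have ht0 := Real.sqrt_nonneg (2+Real.sqrt 5)
  apply eq_of_sq_eq
  · apply mul_nonneg (mul_nonneg hs0 (by linarith)) (by linarith)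
  · apply mul_nonneg (mul_nonneg (by linarith) (by linarith))
    apply mul_nonneg (by linarith) (by linarith)
  linear_combination (((Real.sqrt 5-1)/2)^2*(1+3*(Real.sqrt 5-2))^2)*hs2
    - (4*(1-(Real.sqrt 5-1)/2)^2*(1+2*((Real.sqrt 5-1)/2))^2*(Real.sqrt 5-2)^2)*ht2
    + (-15/16 + (19/8)*Real.sqrt 5 + 13*Real.sqrt 5^2 - (143/8)*Real.sqrt 5^3
       + (119/16)*Real.sqrt 5^4 - Real.sqrt 5^5)*ha

lemma gold2 :
    (2*Real.sqrt (2+Real.sqrt 5)*(Real.sqrt 5-2)) * (3*((Real.sqrt 5-1)/2)^2-1)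
      = 2*(Real.sin (Real.arccos ((Real.sqrt 5-1)/2)) * ((1-(Real.sqrt 5-1)/2)*(Real.sqrt 5-2))) := by
  have ha : Real.sqrt 5 ^ 2 = 5 := Real.sq_sqrt (by norm_num)
  have ha0 := Real.sqrt_nonneg 5
  have ha2 : 2 < Real.sqrt 5 := by nlinarith
  have ha3 : Real.sqrt 5 < 3 := by nlinarith
  have hs : Real.sin (Real.arccos ((Real.sqrt 5-1)/2)) = Real.sqrt (1 - ((Real.sqrt 5-1)/2)^2) :=
    Real.sin_arccos _
  have hs0 : 0 ≤ Real.sin (Real.arccos ((Real.sqrt 5-1)/2)) := by rw [hs]; positivity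
  have hs2 : Real.sin (Real.arccos ((Real.sqrt 5-1)/2))^2 = 1 - ((Real.sqrt 5-1)/2)^2 := by
    rw [hs]; exact Real.sq_sqrt (by nlinarith)
  have ht2 : (Real.sqrt (2+Real.sqrt 5))^2 = 2+Real.sqrt 5 :=
    Real.sq_sqrt (by linarith)
  have ht0 := Real.sqrt_nonneg (2+Real.sqrt 5)
  apply eq_of_sq_eq
  · have h1 : (0:ℝ) < 3*((Real.sqrt 5-1)/2)^2-1 := by nlinarith
    apply mul_nonneg (mul_nonneg (by positivity) (by linarith)) (by linarith)
  · apply mul_nonneg (by norm_num)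
    apply mul_nonneg hs0
    apply mul_nonneg (by linarith) (by linarith)
  linear_combination (4*(Real.sqrt 5-2)^2*(3*((Real.sqrt 5-1)/2)^2-1)^2)*ht2
    - (4*(1-(Real.sqrt 5-1)/2)^2*(Real.sqrt 5-2)^2)*hs2
    + (5 - 10*Real.sqrt 5 - (43/4)*Real.sqrt 5^2 + (99/4)*Real.sqrt 5^3
       - (53/4)*Real.sqrt 5^4 + (9/4)*Real.sqrt 5^5)*ha

lemma cos_arctan_golden :
    Real.cos (Real.arctan (2*Real.sqrt (2+Real.sqrt 5))) = Real.sqrt 5 - 2 := by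
  have := cos_2b_golden
  rwa [show 2*((1/2) * Real.arctan (2*Real.sqrt (2+Real.sqrt 5)))
    = Real.arctan (2*Real.sqrt (2+Real.sqrt 5)) by ring] at this

lemma sin_arctan_golden :
    Real.sin (Real.arctan (2*Real.sqrt (2+Real.sqrt 5)))
      = 2*Real.sqrt (2+Real.sqrt 5) * (Real.sqrt 5 - 2) := by
  have := sin_2b_golden
  rwa [show 2*((1/2) * Real.arctan (2*Real.sqrt (2+Real.sqrt 5)))
    = Real.arctan (2*Real.sqrt (2+Real.sqrt 5)) by ring] at this

set_option maxHeartbeats 2000000 in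
open Real in
/-- on the domain `(−π,π]×(0,π)×(0,π)`, the gradient of `L₁`
vanishes at `(Ω,β₁,β₂)` if and only if `(Ω,β₁,β₂)` is one of the eight listed
critical points. -/
theorem stmt5 (Ω β₁ β₂ : ℝ)
    (hΩ : Ω ∈ Set.Ioc (-π) π) (hβ₁ : β₁ ∈ Set.Ioo 0 π) (hβ₂ : β₂ ∈ Set.Ioo 0 π) :
    fderiv ℝ L1v ![Ω, β₁, β₂] = 0 ↔
      ((Ω, β₁, β₂) = (π/2, π/2, π/2)
      ∨ (Ω, β₁, β₂) = (-(π/2), π/2, π/2)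
      ∨ (Ω, β₁, β₂) = (0, arccos ((Real.sqrt 5 - 1)/2),
          (1/2) * arctan (2 * Real.sqrt (2 + Real.sqrt 5)))
      ∨ (Ω, β₁, β₂) = (π, arccos ((Real.sqrt 5 - 1)/2),
          π - (1/2) * arctan (2 * Real.sqrt (2 + Real.sqrt 5)))
      ∨ (Ω, β₁, β₂) = (0, arccos ((1 + Real.sqrt 6)/5),
          π - (1/2) * arccos (1/(1 - Real.sqrt 6)))
      ∨ (Ω, β₁, β₂) = (π, arccos ((1 + Real.sqrt 6)/5),
          (1/2) * arccos (1/(1 - Real.sqrt 6)))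
      ∨ (Ω, β₁, β₂) = (0, arccos ((1 - Real.sqrt 6)/5),
          π - (1/2) * arccos (1/(1 + Real.sqrt 6)))
      ∨ (Ω, β₁, β₂) = (π, arccos ((1 - Real.sqrt 6)/5),
          (1/2) * arccos (1/(1 + Real.sqrt 6)))) := by
  obtain ⟨hΩ1, hΩ2⟩ := hΩ
  obtain ⟨hb11, hb12⟩ := hβ₁
  obtain ⟨hb21, hb22⟩ := hβ₂
  have hπ := Real.pi_pos
  have hs0 : 0 < Real.sin β₁ := Real.sin_pos_of_pos_of_lt_pi hb11 hb12
  have hcu : Real.cos β₁ < 1 := by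
    have := Real.cos_lt_cos_of_nonneg_of_le_pi (le_refl 0) hb12.le hb11
    rwa [Real.cos_zero] at this
  have hcl : -1 < Real.cos β₁ := by
    have := Real.cos_lt_cos_of_nonneg_of_le_pi hb11.le (le_refl π) hb12
    rwa [Real.cos_pi] at this
  rw [crit_iff]
  constructor
  · rintro ⟨E0, E1, E2⟩
    by_cases hS : Real.sin (2*β₂) = 0
    · -- case β₂ = π/2 : points 1,2
      have hb2v : β₂ = π/2 := beta2_half hb21 hb22 hS
      have hCv : Real.cos (2*β₂) = -1 := by
        rw [hb2v, show 2*(π/2) = π by ring, Real.cos_pi]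
      have hωv : Real.cos Ω = 0 := by
        rw [hS, hCv] at E2
        have h1 : Real.cos Ω * (Real.sin β₁*((1-Real.cos β₁)*(-1))) = 0 := by linarith
        rcases mul_eq_zero.mp h1 with h | h
        · exact h
        · exfalso
          rcases mul_eq_zero.mp h with h | h
          · linarith
          · rcases mul_eq_zero.mp h with h | h <;> linarith
      have hcv : Real.cos β₁ = 0 := by
        rw [hCv, hωv] at E1
        have h1 : Real.sin β₁ * Real.cos β₁ = 0 := by nlinarith [E1]
        rcases mul_eq_zero.mp h1 with h | h
        · linarith
        · exact h
      have hb1v : β₁ = π/2 := beta1_half hb11 hb12 hcv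
      rcases omega_cases' hΩ1 hΩ2 hωv with h | h
      · left; rw [h, hb1v, hb2v]
      · right; left; rw [h, hb1v, hb2v]
    · -- sin Ω = 0
      have hσ : Real.sin Ω = 0 := by
        rcases mul_eq_zero.mp E0 with h | h
        · exact h
        · exfalso
          rcases mul_eq_zero.mp h with h | h
          · linarith
          · rcases mul_eq_zero.mp h with h | h
            · linarith
            · exact hS h
      have hU : Real.cos (2*β₂)^2 + Real.sin (2*β₂)^2 = 1 := by
        have := Real.sin_sq_add_cos_sq (2*β₂); linarith
      have hs2 : Real.sin β₁^2 = 1 - Real.cos β₁^2 := by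
        have := Real.sin_sq_add_cos_sq β₁; linarith
      have hb1arc : β₁ = Real.arccos (Real.cos β₁) := (Real.arccos_cos hb11.le hb12.le).symm
      rcases omega_cases hΩ1 hΩ2 hσ with hΩv | hΩv
      · -- Ω = 0
        have hωv : Real.cos Ω = 1 := by rw [hΩv, Real.cos_zero]
        have hω2 : Real.cos Ω^2 = 1 := by rw [hωv]; norm_num
        rcases key' hs2 hs0 hcl hcu hU hω2 E1 E2 with ⟨hc, hC, hsgn⟩ | ⟨hc, hC, hsgn⟩ | ⟨hc, hC, hsgn⟩
        · -- golden, S > 0 : point 3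
          rw [hωv, mul_one] at hsgn
          have h2b := two_beta_eq_pos hb21 hb22 hsgn
          rw [hC, arccos_golden] at h2b
          rw [hc] at hb1arc
          right; right; left
          simp only [Prod.mk.injEq]
          exact ⟨hΩv, hb1arc, by linarith⟩
        · -- r2, S < 0 : point 5
          rw [hωv, mul_one] at hsgn
          have h2b := two_beta_eq_neg hb21 hb22 hsgn
          rw [hC, ← inv_one_sub_sqrt6] at h2b
          rw [hc] at hb1arc
          right; right; right; right; left
          simp only [Prod.mk.injEq]
          exact ⟨hΩv, hb1arc, by linarith⟩
        · -- r3, S < 0 : point 7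
          rw [hωv, mul_one] at hsgn
          have h2b := two_beta_eq_neg hb21 hb22 hsgn
          rw [hC, ← inv_one_add_sqrt6] at h2b
          rw [hc] at hb1arc
          right; right; right; right; right; right; left
          simp only [Prod.mk.injEq]
          exact ⟨hΩv, hb1arc, by linarith⟩
      · -- Ω = π
        have hωv : Real.cos Ω = -1 := by rw [hΩv, Real.cos_pi]
        have hω2 : Real.cos Ω^2 = 1 := by rw [hωv]; norm_num
        rcases key' hs2 hs0 hcl hcu hU hω2 E1 E2 with ⟨hc, hC, hsgn⟩ | ⟨hc, hC, hsgn⟩ | ⟨hc, hC, hsgn⟩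
        · -- golden, S < 0 : point 4
          rw [hωv] at hsgn
          have hSneg : Real.sin (2*β₂) < 0 := by nlinarith [hsgn]
          have h2b := two_beta_eq_neg hb21 hb22 hSneg
          rw [hC, arccos_golden] at h2b
          rw [hc] at hb1arc
          right; right; right; left
          simp only [Prod.mk.injEq]
          exact ⟨hΩv, hb1arc, by linarith⟩
        · -- r2, S > 0 : point 6
          rw [hωv] at hsgn
          have hSpos : 0 < Real.sin (2*β₂) := by nlinarith [hsgn]
          have h2b := two_beta_eq_pos hb21 hb22 hSpos
          rw [hC, ← inv_one_sub_sqrt6] at h2b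
          rw [hc] at hb1arc
          right; right; right; right; right; left
          simp only [Prod.mk.injEq]
          exact ⟨hΩv, hb1arc, by linarith⟩
        · -- r3, S > 0 : point 8
          rw [hωv] at hsgn
          have hSpos : 0 < Real.sin (2*β₂) := by nlinarith [hsgn]
          have h2b := two_beta_eq_pos hb21 hb22 hSpos
          rw [hC, ← inv_one_add_sqrt6] at h2b
          rw [hc] at hb1arc
          right; right; right; right; right; right; right
          simp only [Prod.mk.injEq]
          exact ⟨hΩv, hb1arc, by linarith⟩
  · -- backward direction
    have ha : Real.sqrt 5 ^ 2 = 5 := Real.sq_sqrt (by norm_num)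
    have ha0 := Real.sqrt_nonneg 5
    have ha2 : 2 < Real.sqrt 5 := by nlinarith
    have ha3 : Real.sqrt 5 < 3 := by nlinarith
    have hb : Real.sqrt 6 ^ 2 = 6 := Real.sq_sqrt (by norm_num)
    have hb0 := Real.sqrt_nonneg 6
    have hb2 : 2 < Real.sqrt 6 := by nlinarith
    have hb3 : Real.sqrt 6 < 3 := by nlinarith
    have hr1 : (-1:ℝ) ≤ (Real.sqrt 5 - 1)/2 := by linarith
    have hr2 : (Real.sqrt 5 - 1)/2 ≤ 1 := by linarith
    intro h
    rcases h with h|h|h|h|h|h|h|h <;>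
      (rw [Prod.mk.injEq, Prod.mk.injEq] at h
       obtain ⟨h1, h2, h3⟩ := h
       subst h1; subst h2; subst h3)
    · refine ⟨?_, ?_, ?_⟩ <;>
        norm_num [show 2*(π/2 : ℝ) = π from by ring, Real.sin_pi, Real.cos_pi,
          Real.cos_pi_div_two, Real.sin_pi_div_two]
    · refine ⟨?_, ?_, ?_⟩ <;>
        norm_num [show 2*(π/2 : ℝ) = π from by ring, Real.sin_pi, Real.cos_pi,
          Real.cos_pi_div_two, Real.sin_pi_div_two, Real.cos_neg, Real.sin_neg]
    · -- point 3
      rw [show 2*((1/2) * Real.arctan (2*Real.sqrt (2+Real.sqrt 5)))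
            = Real.arctan (2*Real.sqrt (2+Real.sqrt 5)) from by ring]
      refine ⟨?_, ?_, ?_⟩
      · rw [Real.sin_zero]; ring
      · rw [Real.cos_zero, cos_arctan_golden, sin_arctan_golden, Real.cos_arccos hr1 hr2]
        linear_combination gold1
      · rw [cos_arctan_golden, sin_arctan_golden, Real.cos_arccos hr1 hr2, Real.cos_zero]
        linear_combination gold2
    · -- point 4
      rw [show 2*(π - (1/2) * Real.arctan (2*Real.sqrt (2+Real.sqrt 5)))
            = 2*π - Real.arctan (2*Real.sqrt (2+Real.sqrt 5)) from by ring,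
        Real.cos_two_pi_sub, Real.sin_two_pi_sub]
      refine ⟨?_, ?_, ?_⟩
      · rw [Real.sin_pi]; ring
      · rw [Real.cos_pi, cos_arctan_golden, sin_arctan_golden, Real.cos_arccos hr1 hr2]
        linear_combination gold1
      · rw [cos_arctan_golden, sin_arctan_golden, Real.cos_arccos hr1 hr2, Real.cos_pi]
        linear_combination -gold2
    · -- point 5
      rw [inv_one_sub_sqrt6]
      have hx1 : (-1:ℝ) ≤ -((1+Real.sqrt 6)/5) := by linarith
      have hx2 : -((1+Real.sqrt 6)/5) ≤ 1 := by linarith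
      have hc1' : (-1:ℝ) ≤ (1+Real.sqrt 6)/5 := by linarith
      have hc2' : (1+Real.sqrt 6)/5 ≤ 1 := by linarith
      rw [show 2*(π - (1/2) * Real.arccos (-((1+Real.sqrt 6)/5)))
            = 2*π - Real.arccos (-((1+Real.sqrt 6)/5)) from by ring,
        Real.cos_two_pi_sub, Real.sin_two_pi_sub, Real.cos_arccos hx1 hx2,
        Real.sin_arccos, Real.cos_arccos hc1' hc2', Real.sin_arccos,
        show (1:ℝ) - (-((1+Real.sqrt 6)/5))^2 = 1 - ((1+Real.sqrt 6)/5)^2 from by ring]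
      refine ⟨?_, ?_, ?_⟩
      · rw [Real.sin_zero]; ring
      · rw [Real.cos_zero]
        linear_combination (-(Real.sqrt (1-((1+Real.sqrt 6)/5)^2))/5)*hb
      · rw [Real.cos_zero]
        linear_combination (-(Real.sqrt (1-((1+Real.sqrt 6)/5)^2))/5)*hb
    · -- point 6
      rw [inv_one_sub_sqrt6]
      have hx1 : (-1:ℝ) ≤ -((1+Real.sqrt 6)/5) := by linarith
      have hx2 : -((1+Real.sqrt 6)/5) ≤ 1 := by linarith
      have hc1' : (-1:ℝ) ≤ (1+Real.sqrt 6)/5 := by linarith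
      have hc2' : (1+Real.sqrt 6)/5 ≤ 1 := by linarith
      rw [show 2*((1/2) * Real.arccos (-((1+Real.sqrt 6)/5)))
            = Real.arccos (-((1+Real.sqrt 6)/5)) from by ring,
        Real.cos_arccos hx1 hx2, Real.sin_arccos,
        Real.cos_arccos hc1' hc2', Real.sin_arccos,
        show (1:ℝ) - (-((1+Real.sqrt 6)/5))^2 = 1 - ((1+Real.sqrt 6)/5)^2 from by ring]
      refine ⟨?_, ?_, ?_⟩
      · rw [Real.sin_pi]; ring
      · rw [Real.cos_pi]
        linear_combination (-(Real.sqrt (1-((1+Real.sqrt 6)/5)^2))/5)*hb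
      · rw [Real.cos_pi]
        linear_combination ((Real.sqrt (1-((1+Real.sqrt 6)/5)^2))/5)*hb
    · -- point 7
      rw [inv_one_add_sqrt6]
      have hx1 : (-1:ℝ) ≤ (Real.sqrt 6-1)/5 := by linarith
      have hx2 : (Real.sqrt 6-1)/5 ≤ 1 := by linarith
      have hc1' : (-1:ℝ) ≤ (1-Real.sqrt 6)/5 := by linarith
      have hc2' : (1-Real.sqrt 6)/5 ≤ 1 := by linarith
      rw [show 2*(π - (1/2) * Real.arccos ((Real.sqrt 6-1)/5))
            = 2*π - Real.arccos ((Real.sqrt 6-1)/5) from by ring,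
        Real.cos_two_pi_sub, Real.sin_two_pi_sub, Real.cos_arccos hx1 hx2,
        Real.sin_arccos, Real.cos_arccos hc1' hc2', Real.sin_arccos,
        show (1:ℝ) - ((Real.sqrt 6-1)/5)^2 = 1 - ((1-Real.sqrt 6)/5)^2 from by ring]
      refine ⟨?_, ?_, ?_⟩
      · rw [Real.sin_zero]; ring
      · rw [Real.cos_zero]
        linear_combination (-(Real.sqrt (1-((1-Real.sqrt 6)/5)^2))/5)*hb
      · rw [Real.cos_zero]
        linear_combination (-(Real.sqrt (1-((1-Real.sqrt 6)/5)^2))/5)*hb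
    · -- point 8
      rw [inv_one_add_sqrt6]
      have hx1 : (-1:ℝ) ≤ (Real.sqrt 6-1)/5 := by linarith
      have hx2 : (Real.sqrt 6-1)/5 ≤ 1 := by linarith
      have hc1' : (-1:ℝ) ≤ (1-Real.sqrt 6)/5 := by linarith
      have hc2' : (1-Real.sqrt 6)/5 ≤ 1 := by linarith
      rw [show 2*((1/2) * Real.arccos ((Real.sqrt 6-1)/5))
            = Real.arccos ((Real.sqrt 6-1)/5) from by ring,
        Real.cos_arccos hx1 hx2, Real.sin_arccos,
        Real.cos_arccos hc1' hc2', Real.sin_arccos,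
        show (1:ℝ) - ((Real.sqrt 6-1)/5)^2 = 1 - ((1-Real.sqrt 6)/5)^2 from by ring]
      refine ⟨?_, ?_, ?_⟩
      · rw [Real.sin_pi]; ring
      · rw [Real.cos_pi]
        linear_combination (-(Real.sqrt (1-((1-Real.sqrt 6)/5)^2))/5)*hb
      · rw [Real.cos_pi]
        linear_combination ((Real.sqrt (1-((1-Real.sqrt 6)/5)^2))/5)*hb
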